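/- (Bregman–Minc inequality) If A is an n×n matrix with entries in {0,1} and row sums r_1,...,r_n all nonzero, then per(A) ≤ ∏_{i=1}^n (r_i!)^{1/r_i}. -/

import Mathlib

open Finset Equiv

namespace BregmanAux


/-- Permanent over ℕ. -/
def perN {n : ℕ} (M : Matrix (Fin n) (Fin n) ℕ) : ℕ :=
  ∑ σ : Equiv.Perm (Fin n), ∏ i, M i (σ i)

lemma sum_filter_zero {n : ℕ} (M : Matrix (Fin (n+1)) (Fin (n+1)) ℕ) :
    ∑ σ ∈ Finset.univ.filter (fun σ : Equiv.Perm (Fin (n+1)) => σ 0 = 0), ∏ j, M j (σ j)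
      = M 0 0 * perN (M.submatrix Fin.succ Fin.succ) := by
  rw [perN, Finset.mul_sum]
  refine (Finset.sum_bij
    (fun (e : Equiv.Perm (Fin n)) _ => Equiv.Perm.decomposeFin.symm (0, e)) ?_ ?_ ?_ ?_).symm
  · intro e _
    simp [Finset.mem_filter]
  · intro e₁ _ e₂ _ h
    have := Equiv.Perm.decomposeFin.symm.injective h
    exact (Prod.mk.injEq _ _ _ _).mp this |>.2
  · intro σ hσ
    simp only [Finset.mem_filter, Finset.mem_univ, true_and] at hσ
    refine ⟨(Equiv.Perm.decomposeFin σ).2, Finset.mem_univ _, ?_⟩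
    have h1 : Equiv.Perm.decomposeFin.symm
        ((Equiv.Perm.decomposeFin σ).1, (Equiv.Perm.decomposeFin σ).2) = σ := by
      rw [Prod.mk.eta, Equiv.symm_apply_apply]
    have h2 : (Equiv.Perm.decomposeFin σ).1 = 0 := by
      have h3 := congrArg (fun τ : Equiv.Perm (Fin (n+1)) => τ 0) h1
      simp only [Equiv.Perm.decomposeFin_symm_apply_zero] at h3
      rw [h3, hσ]
    rw [h2] at h1
    exact h1
  · intro e _
    rw [Fin.prod_univ_succ]
    simp [Matrix.submatrix_apply]

lemma sum_filter_eq {n : ℕ} (M : Matrix (Fin (n+1)) (Fin (n+1)) ℕ) (i k : Fin (n+1)) :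
    ∑ σ ∈ Finset.univ.filter (fun σ : Equiv.Perm (Fin (n+1)) => σ i = k), ∏ j, M j (σ j)
      = M i k * perN (M.submatrix i.succAbove k.succAbove) := by
  have hsub : M.submatrix i.succAbove k.succAbove
      = (M.submatrix i.cycleRange.symm k.cycleRange.symm).submatrix Fin.succ Fin.succ := by
    ext a b
    rw [Matrix.submatrix_apply, Matrix.submatrix_apply, Matrix.submatrix_apply,
      Fin.cycleRange_symm_succ, Fin.cycleRange_symm_succ]
  have hM00 : M i k = (M.submatrix i.cycleRange.symm k.cycleRange.symm) 0 0 := by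
    rw [Matrix.submatrix_apply, Fin.cycleRange_symm_zero, Fin.cycleRange_symm_zero]
  rw [hsub, hM00, ← sum_filter_zero]
  refine Finset.sum_bij (fun (σ : Equiv.Perm (Fin (n+1))) _ =>
    (i.cycleRange.symm.trans σ).trans k.cycleRange) ?_ ?_ ?_ ?_
  · intro σ hσ
    simp only [Finset.mem_filter, Finset.mem_univ, true_and] at hσ ⊢
    simp only [Equiv.trans_apply, Fin.cycleRange_symm_zero, hσ, Fin.cycleRange_self]
  · intro σ₁ _ σ₂ _ h
    refine Equiv.ext fun x => ?_
    have hx := congrArg (fun ρ : Equiv.Perm (Fin (n+1)) => ρ (i.cycleRange x)) h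
    simp only [Equiv.trans_apply, Equiv.symm_apply_apply] at hx
    exact k.cycleRange.injective hx
  · intro τ hτ
    simp only [Finset.mem_filter, Finset.mem_univ, true_and] at hτ
    refine ⟨(i.cycleRange.trans τ).trans k.cycleRange.symm, ?_, ?_⟩
    · simp only [Finset.mem_filter, Finset.mem_univ, true_and, Equiv.trans_apply,
        Fin.cycleRange_self, hτ, Fin.cycleRange_symm_zero]
    · refine Equiv.ext fun x => ?_
      simp only [Equiv.trans_apply, Equiv.apply_symm_apply, Equiv.symm_apply_apply]
  · intro σ _
    rw [← Equiv.prod_comp i.cycleRange.symm (fun z => M z (σ z))]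
    refine Finset.prod_congr rfl fun j _ => ?_
    simp only [Matrix.submatrix_apply, Equiv.trans_apply, Equiv.symm_apply_apply]

lemma expansion {n : ℕ} (M : Matrix (Fin (n+1)) (Fin (n+1)) ℕ) (i : Fin (n+1)) :
    perN M = ∑ k, M i k * perN (M.submatrix i.succAbove k.succAbove) := by
  have h := Finset.sum_fiberwise (s := (Finset.univ : Finset (Equiv.Perm (Fin (n+1)))))
    (g := fun σ => σ i) (f := fun σ => ∏ j, M j (σ j))
  rw [perN, ← h]
  exact Finset.sum_congr rfl fun k _ => sum_filter_eq M i k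


lemma jensen_xlogx {ι : Type*} (s : Finset ι) (g : ι → ℝ) (hg : ∀ x ∈ s, 0 ≤ g x)
    (r : ℕ) (hr : s.card = r) (hrpos : 0 < r) :
    (∑ x ∈ s, g x) * Real.log (∑ x ∈ s, g x)
      ≤ (∑ x ∈ s, g x) * Real.log r + ∑ x ∈ s, g x * Real.log (g x) := by
  set q := ∑ x ∈ s, g x with hq
  have hq0 : 0 ≤ q := Finset.sum_nonneg hg
  rcases eq_or_lt_of_le hq0 with hq0' | hqpos
  · have hall : ∀ x ∈ s, g x = 0 :=
      (Finset.sum_eq_zero_iff_of_nonneg hg).mp hq0'.symm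
    have h1 : ∑ x ∈ s, g x * Real.log (g x) = 0 :=
      Finset.sum_eq_zero fun x hx => by rw [hall x hx, zero_mul]
    rw [← hq0', h1]
    simp
  · have htermwise : ∀ x ∈ s, g x * (Real.log q - Real.log r - Real.log (g x)) ≤ q / r - g x := by
      intro x hx
      rcases eq_or_lt_of_le (hg x hx) with h0 | hpos
      · rw [← h0]
        simp only [zero_mul, sub_zero]
        positivity
      · have hqr : (0:ℝ) < q / r := by positivity
        have h1 : Real.log q - Real.log r - Real.log (g x) = Real.log ((q / r) / g x) := by
          rw [Real.log_div (ne_of_gt hqr) (ne_of_gt hpos), Real.log_div (ne_of_gt hqpos)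
            (by exact_mod_cast Nat.cast_pos.mpr hrpos |>.ne')]
        rw [h1]
        have h2 := Real.log_le_sub_one_of_pos (div_pos hqr hpos)
        calc g x * Real.log (q / r / g x) ≤ g x * (q / r / g x - 1) := by
              exact mul_le_mul_of_nonneg_left h2 (le_of_lt hpos)
          _ = q / r - g x := by
              field_simp
    have hsum := Finset.sum_le_sum htermwise
    have hrhs : ∑ x ∈ s, (q / r - g x) = 0 := by
      rw [Finset.sum_sub_distrib, Finset.sum_const, hr, ← hq, nsmul_eq_mul]
      field_simp
      ring
    rw [hrhs] at hsum
    have hexpand : ∑ x ∈ s, g x * (Real.log q - Real.log r - Real.log (g x))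
        = q * Real.log q - q * Real.log r - ∑ x ∈ s, g x * Real.log (g x) := by
      rw [Finset.sum_congr rfl (fun x _ => mul_sub (g x) _ _),
        Finset.sum_congr rfl (fun x _ => congrArg (· - g x * Real.log (g x)) (mul_sub (g x) _ _))]
      rw [Finset.sum_sub_distrib, Finset.sum_sub_distrib, ← Finset.sum_mul, ← Finset.sum_mul, ← hq]
    rw [hexpand] at hsum
    linarith

/-- `φ m = log (m!) / m`, with `φ 0 = 0`. -/
noncomputable def phi (m : ℕ) : ℝ := Real.log m.factorial / m

lemma phi_nonneg (m : ℕ) : 0 ≤ phi m := by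
  unfold phi
  apply div_nonneg _ (Nat.cast_nonneg m)
  exact Real.log_nonneg (by exact_mod_cast Nat.one_le_iff_ne_zero.mpr m.factorial_ne_zero)

lemma mul_phi (m : ℕ) : (m : ℝ) * phi m = Real.log m.factorial := by
  rcases Nat.eq_zero_or_pos m with h | h
  · simp [h, phi]
  · unfold phi
    field_simp

theorem bregman' (n : ℕ) (B : Matrix (Fin n) (Fin n) ℕ) (hB : ∀ i j, B i j ≤ 1) :
    (perN B : ℝ) ≤ ∏ i, ((∑ j, B i j).factorial : ℝ) ^ (1 / ((∑ j, B i j : ℕ) : ℝ)) := by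
  induction n with
  | zero =>
      simp [perN]
  | succ n IH =>
    set S := Finset.univ.filter (fun σ : Equiv.Perm (Fin (n+1)) => ∀ i, B i (σ i) = 1) with hS_def
    set R : Fin (n+1) → ℕ := fun i => ∑ j, B i j with hR_def
    set t : Fin (n+1) → Fin (n+1) → ℕ :=
      fun i k => perN (B.submatrix i.succAbove k.succAbove) with ht_def
    have hprod : ∀ σ : Equiv.Perm (Fin (n+1)),
        ∏ i, B i (σ i) = if (∀ i, B i (σ i) = 1) then 1 else 0 := by
      intro σ
      split_ifs with h
      · exact Finset.prod_eq_one fun i _ => h i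
      · push_neg at h
        obtain ⟨i, hi⟩ := h
        refine Finset.prod_eq_zero (Finset.mem_univ i) ?_
        have := hB i (σ i); omega
    have hcard : perN B = S.card := by
      rw [perN, Finset.card_filter]
      exact Finset.sum_congr rfl fun σ _ => hprod σ
    by_cases hp : perN B = 0
    · rw [hp, Nat.cast_zero]
      exact Finset.prod_nonneg fun i _ => Real.rpow_nonneg (Nat.cast_nonneg _) _
    -- nontrivial case
    have hppos : 0 < perN B := Nat.pos_of_ne_zero hp
    have hS : S.Nonempty := by
      rw [hcard] at hp
      exact Finset.card_pos.mp (Nat.pos_of_ne_zero hp)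
    have hR1 : ∀ j, 1 ≤ R j := by
      intro j
      obtain ⟨σ, hσ⟩ := hS
      rw [hS_def, Finset.mem_filter] at hσ
      calc 1 = B j (σ j) := (hσ.2 j).symm
        _ ≤ ∑ k, B j k := Finset.single_le_sum (fun k _ => Nat.zero_le _) (Finset.mem_univ _)
    have hRn : ∀ j, R j ≤ n + 1 := by
      intro j
      calc R j ≤ ∑ _k : Fin (n+1), 1 := Finset.sum_le_sum fun k _ => hB j k
        _ = n + 1 := by simp
    have hrowcard : ∀ i, (Finset.univ.filter (fun k => B i k = 1)).card = R i := by
      intro i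
      rw [Finset.card_filter]
      refine Finset.sum_congr rfl fun k _ => ?_
      have := hB i k
      split_ifs with h <;> omega
    have hfiber : ∀ i k, (S.filter (fun σ => σ i = k)).card = B i k * t i k := by
      intro i k
      have heq : S.filter (fun σ => σ i = k)
          = (Finset.univ.filter (fun σ : Equiv.Perm (Fin (n+1)) => σ i = k)).filter
              (fun σ => ∀ i', B i' (σ i') = 1) := by
        rw [hS_def, Finset.filter_filter, Finset.filter_filter]
        exact Finset.filter_congr fun σ _ => and_comm
      rw [heq, Finset.card_filter]
      rw [Finset.sum_congr rfl fun σ _ => (hprod σ).symm]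
      exact sum_filter_eq B i k
    have hexp : ∀ i, ∑ k, B i k * t i k = perN B := fun i => (expansion B i).symm
    -- Step A (Jensen per row)
    have hA : ∀ i, (perN B : ℝ) * Real.log (perN B)
        ≤ (perN B : ℝ) * Real.log (R i)
          + ∑ k, ((B i k * t i k : ℕ) : ℝ) * Real.log (t i k) := by
      intro i
      have hsumg : ∑ k ∈ Finset.univ.filter (fun k => B i k = 1), (t i k : ℝ) = (perN B : ℝ) := by
        have hnat : ∑ k ∈ Finset.univ.filter (fun k => B i k = 1), t i k = perN B := by
          rw [← hexp i, Finset.sum_filter]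
          refine Finset.sum_congr rfl fun k _ => ?_
          split_ifs with h
          · rw [h, one_mul]
          · have h0 : B i k = 0 := by have := hB i k; omega
            rw [h0, zero_mul]
        exact_mod_cast congrArg (Nat.cast : ℕ → ℝ) hnat
      have hj := jensen_xlogx (Finset.univ.filter (fun k => B i k = 1))
        (fun k => (t i k : ℝ)) (fun k _ => Nat.cast_nonneg _) (R i) (hrowcard i) (hR1 i)
      simp only [hsumg] at hj
      refine hj.trans (le_of_eq ?_)
      congr 1
      rw [Finset.sum_filter]
      refine Finset.sum_congr rfl fun k _ => ?_
      split_ifs with h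
      · rw [h]; push_cast; ring
      · have h0 : B i k = 0 := by have := hB i k; omega
        rw [h0]; push_cast; ring
    -- Step B (fiber counting)
    have hBstep : ∀ i, ∑ k, ((B i k * t i k : ℕ) : ℝ) * Real.log (t i k)
        = ∑ σ ∈ S, Real.log (t i (σ i)) := by
      intro i
      have h1 := Finset.sum_fiberwise S (fun σ => σ i) (fun σ => Real.log (t i (σ i)))
      rw [← h1]
      refine Finset.sum_congr rfl fun k _ => ?_
      have h2 : ∑ σ ∈ S.filter (fun σ => σ i = k), Real.log (t i (σ i))
          = ∑ σ ∈ S.filter (fun σ => σ i = k), Real.log (t i k) :=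
        Finset.sum_congr rfl fun σ hσ => by rw [(Finset.mem_filter.mp hσ).2]
      rw [h2, Finset.sum_const, hfiber i k, nsmul_eq_mul]
    -- Step C (induction hypothesis per minor)
    have hC : ∀ (i k : Fin (n+1)), Real.log (t i k)
        ≤ ∑ a : Fin n, phi (R (i.succAbove a) - B (i.succAbove a) k) := by
      intro i k
      have hrow : ∀ a, ∑ b, B.submatrix i.succAbove k.succAbove a b
          = R (i.succAbove a) - B (i.succAbove a) k := by
        intro a
        have h3 := Fin.sum_univ_succAbove (fun b => B (i.succAbove a) b) k
        simp only [Matrix.submatrix_apply]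
        have : R (i.succAbove a) = ∑ b, B (i.succAbove a) b := rfl
        omega
      rcases Nat.eq_zero_or_pos (t i k) with h0 | hpos
      · rw [h0]
        simp only [Nat.cast_zero, Real.log_zero]
        exact Finset.sum_nonneg fun a _ => phi_nonneg _
      · have hIH := IH (B.submatrix i.succAbove k.succAbove) (fun a b => hB _ _)
        have hlog := Real.log_le_log (by exact_mod_cast hpos) hIH
        refine hlog.trans (le_of_eq ?_)
        rw [Real.log_prod (fun a _ => ne_of_gt (Real.rpow_pos_of_pos (by positivity) _))]
        refine Finset.sum_congr rfl fun a _ => ?_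
        rw [hrow a, Real.log_rpow (by positivity)]
        unfold phi
        rw [mul_comm, mul_one_div]
    -- Step D (reorganization per good permutation)
    have hD : ∀ σ ∈ S, ∑ i, Real.log (t i (σ i))
        ≤ ∑ j, (Real.log (R j - 1).factorial + ((n+1 : ℝ) - R j) * phi (R j)) := by
      intro σ hσ
      have hgood : ∀ i, B i (σ i) = 1 := (Finset.mem_filter.mp hσ).2
      calc ∑ i, Real.log (t i (σ i))
          ≤ ∑ i, ∑ a : Fin n, phi (R (i.succAbove a) - B (i.succAbove a) (σ i)) :=
            Finset.sum_le_sum fun i _ => hC i (σ i)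
        _ = ∑ i, ((∑ j, phi (R j - B j (σ i))) - phi (R i - B i (σ i))) := by
            refine Finset.sum_congr rfl fun i _ => ?_
            have h4 := Fin.sum_univ_succAbove (fun j => phi (R j - B j (σ i))) i
            linarith
        _ = (∑ i, ∑ j, phi (R j - B j (σ i))) - ∑ i, phi (R i - B i (σ i)) :=
            Finset.sum_sub_distrib _ _
        _ = (∑ k, ∑ j, phi (R j - B j k)) - ∑ i, phi (R i - 1) := by
            rw [Equiv.sum_comp σ (fun k => ∑ j, phi (R j - B j k))]
            congr 1
            exact Finset.sum_congr rfl fun i _ => by rw [hgood i]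
        _ = ∑ j, (∑ k, phi (R j - B j k)) - ∑ j, phi (R j - 1) := by rw [Finset.sum_comm]
        _ = ∑ j, ((∑ k, phi (R j - B j k)) - phi (R j - 1)) := (Finset.sum_sub_distrib _ _).symm
        _ = ∑ j, (Real.log (R j - 1).factorial + ((n+1 : ℝ) - R j) * phi (R j)) := by
            refine Finset.sum_congr rfl fun j _ => ?_
            have hinner : ∑ k, phi (R j - B j k)
                = (R j : ℝ) * phi (R j - 1) + ((n+1 : ℝ) - R j) * phi (R j) := by
              have h5 : ∀ k, phi (R j - B j k)
                  = if B j k = 1 then phi (R j - 1) else phi (R j) := by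
                intro k
                have := hB j k
                split_ifs with h
                · rw [h]
                · have h0 : B j k = 0 := by omega
                  rw [h0, Nat.sub_zero]
              rw [Finset.sum_congr rfl fun k _ => h5 k, Finset.sum_ite, Finset.sum_const,
                Finset.sum_const, hrowcard j]
              have hneg : (Finset.univ.filter (fun k => ¬ B j k = 1)).card = n + 1 - R j := by
                have h12 := Finset.card_filter_add_card_filter_not
                  (s := (Finset.univ : Finset (Fin (n+1)))) (p := fun k => B j k = 1)
                rw [hrowcard j] at h12
                simp only [Finset.card_univ, Fintype.card_fin] at h12
                omega
              rw [hneg, nsmul_eq_mul, nsmul_eq_mul]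
              have := hRn j
              push_cast [Nat.cast_sub this]
              ring
            rw [hinner]
            have hcast : ((R j - 1 : ℕ) : ℝ) = (R j : ℝ) - 1 := by
              have := hR1 j; push_cast [Nat.cast_sub this]; ring
            have h6 : ((R j - 1 : ℕ) : ℝ) * phi (R j - 1) = Real.log (R j - 1).factorial :=
              mul_phi _
            rw [hcast] at h6
            linarith
    -- Combine everything
    have hmain : Real.log (perN B) ≤ ∑ j, phi (R j) := by
      have hchain : ((n+1 : ℝ)) * ((perN B : ℝ) * Real.log (perN B))
          ≤ ((n+1 : ℝ)) * ((perN B : ℝ) * ∑ j, phi (R j)) := by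
        calc ((n+1 : ℝ)) * ((perN B : ℝ) * Real.log (perN B))
            = ∑ _i : Fin (n+1), (perN B : ℝ) * Real.log (perN B) := by
              rw [Finset.sum_const, Finset.card_univ, Fintype.card_fin, nsmul_eq_mul]
              push_cast; ring
          _ ≤ ∑ i, ((perN B : ℝ) * Real.log (R i) + ∑ σ ∈ S, Real.log (t i (σ i))) := by
              refine Finset.sum_le_sum fun i _ => ?_
              rw [← hBstep i]; exact hA i
          _ = (perN B : ℝ) * ∑ i, Real.log (R i) + ∑ σ ∈ S, ∑ i, Real.log (t i (σ i)) := by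
              rw [Finset.sum_add_distrib, ← Finset.mul_sum, Finset.sum_comm]
          _ ≤ (perN B : ℝ) * ∑ i, Real.log (R i)
              + ∑ _σ ∈ S, ∑ j, (Real.log (R j - 1).factorial + ((n+1 : ℝ) - R j) * phi (R j)) := by
              exact add_le_add_right (Finset.sum_le_sum hD) _
          _ = (perN B : ℝ) * ∑ i, Real.log (R i)
              + (perN B : ℝ) * ∑ j, (Real.log (R j - 1).factorial + ((n+1 : ℝ) - R j) * phi (R j)) := by
              rw [Finset.sum_const, nsmul_eq_mul, hcard]
          _ = (perN B : ℝ) * ∑ j, (Real.log (R j) + (Real.log (R j - 1).factorial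
              + ((n+1 : ℝ) - R j) * phi (R j))) := by
              simp only [Finset.sum_add_distrib, mul_add]
          _ = (perN B : ℝ) * ∑ j, ((n+1 : ℝ)) * phi (R j) := by
              congr 1
              refine Finset.sum_congr rfl fun j _ => ?_
              have h7 : Real.log (R j) + Real.log (R j - 1).factorial = Real.log (R j).factorial := by
                have h8 : (R j).factorial = R j * (R j - 1).factorial := by
                  obtain ⟨m, hm⟩ : ∃ m, R j = m + 1 := ⟨R j - 1, by have := hR1 j; omega⟩
                  rw [hm]
                  simp [Nat.factorial_succ]
                rw [h8]
                push_cast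
                rw [Real.log_mul (Nat.cast_ne_zero.mpr (by have := hR1 j; omega))
                  (Nat.cast_ne_zero.mpr (Nat.factorial_ne_zero _))]
              have h13 := mul_phi (R j)
              linarith
          _ = ((n+1 : ℝ)) * ((perN B : ℝ) * ∑ j, phi (R j)) := by
              rw [← Finset.mul_sum]
              ring
      have h9 : (0:ℝ) < (n+1 : ℝ) := by positivity
      have h10 : (0:ℝ) < (perN B : ℝ) := by exact_mod_cast hppos
      have h11 := le_of_mul_le_mul_left hchain h9
      exact le_of_mul_le_mul_left h11 h10
    -- conclude via exp
    have h10 : (0:ℝ) < (perN B : ℝ) := by exact_mod_cast hppos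
    calc (perN B : ℝ) = Real.exp (Real.log (perN B)) := (Real.exp_log h10).symm
      _ ≤ Real.exp (∑ j, phi (R j)) := Real.exp_le_exp.mpr hmain
      _ = ∏ j, Real.exp (phi (R j)) := Real.exp_sum _ _
      _ = ∏ j, ((R j).factorial : ℝ) ^ (1 / (R j : ℝ)) := by
          refine Finset.prod_congr rfl fun j _ => ?_
          rw [Real.rpow_def_of_pos (by positivity), mul_one_div]
          rfl


end BregmanAux

/-- The permanent of a square matrix. -/
def permanent {n : ℕ} {R : Type*} [CommRing R] (A : Matrix (Fin n) (Fin n) R) : R :=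
  ∑ σ : Equiv.Perm (Fin n), ∏ i, A i (σ i)

/-- Bregman–Minc inequality: for a 0-1 matrix with nonzero row sums `r i`,
`per A ≤ ∏ i (r i !)^(1 / r i)`. -/
theorem bregman_minc (n : ℕ) (A : Matrix (Fin n) (Fin n) ℝ)
    (hA : ∀ i j, A i j = 0 ∨ A i j = 1)
    (r : Fin n → ℕ) (hr : ∀ i, ∑ j, A i j = (r i : ℝ)) (hpos : ∀ i, 0 < r i) :
    permanent A ≤ ∏ i, ((r i).factorial : ℝ) ^ ((1 : ℝ) / (r i : ℝ)) := by
  classical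
  set B : Matrix (Fin n) (Fin n) ℕ := fun i j => if A i j = 1 then 1 else 0 with hB_def
  have hcastB : ∀ i j, (B i j : ℝ) = A i j := by
    intro i j
    rcases hA i j with h | h
    · simp [hB_def, h]
    · simp [hB_def, h]
  have hB1 : ∀ i j, B i j ≤ 1 := by
    intro i j
    simp only [hB_def]
    split <;> omega
  have hper : permanent A = (BregmanAux.perN B : ℝ) := by
    rw [permanent, BregmanAux.perN]
    push_cast
    exact (Finset.sum_congr rfl fun σ _ =>
      Finset.prod_congr rfl fun i _ => hcastB i (σ i)).symm
  have hrow : ∀ i, (∑ j, B i j) = r i := by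
    intro i
    have h1 : ((∑ j, B i j : ℕ) : ℝ) = (r i : ℝ) := by
      push_cast
      rw [← hr i]
      exact Finset.sum_congr rfl fun j _ => hcastB i j
    exact_mod_cast h1
  have h2 := BregmanAux.bregman' n B hB1
  rw [hper]
  refine h2.trans (le_of_eq ?_)
  exact Finset.prod_congr rfl fun i _ => by rw [hrow i]
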